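/- arXiv:1711.04701 — 3 statements merged into one kernel-verified Lean document; each statement's English description precedes it below -/
import Mathlib

section
/- Let V be the graded vector space over a field K of characteristic zero spanned by two symbols a and b in degree 1, and let U be the truncated tensor algebra T̲(V) = ⊕_{n≥1} V^{⊗n} with differential b₁(v₁⋯vₙ) = Σ_{i=1}^n (-1)^{i+1} v₁⋯v_i (a+b) v_{i+1}⋯vₙ (inserting a+b after the i-th factor). Then the cochain complex (U, b₁) is acyclic, i.e. H^n(U) = 0 for all n. -/
/-- The degree-`n` component `V^{⊗n}` of the truncated tensor algebra on
`V = span{a, b}` (with `a, b` in degree 1), realized as functions on words of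
length `n` over the two-letter alphabet `{a, b}` (encoded as `Bool`). -/
abbrev Wd (K : Type) (n : ℕ) := (Fin n → Bool) → K

/-- The differential `b₁` inserting `a + b` after the `i`-th tensor factor with
sign `(-1)^{i+1}`, for `i = 1, …, n`. On the function model, the coefficient of
a word `w` of length `n+1` is the signed sum over insertion positions `p ≠ 0`
of the coefficient of the word obtained by deleting the letter at position `p`. -/
def b1 (K : Type) [Field K] (n : ℕ) (X : Wd K n) : Wd K (n + 1) :=
  fun w => ∑ p : Fin (n + 1),
    (if (p : ℕ) = 0 then 0 else (-1 : K) ^ ((p : ℕ) + 1)) * X (fun j => w (p.succAbove j))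

lemma fin_val_mk {m a : ℕ} (h : a < m) : ((⟨a, h⟩ : Fin m) : ℕ) = a := rfl

/-- Insert the letter `false` at index 1. -/
def ins {m : ℕ} (u : Fin (m + 1) → Bool) : Fin (m + 2) → Bool :=
  fun i => if _ : (i : ℕ) = 0 then u 0 else if (i : ℕ) = 1 then false
    else u ⟨(i : ℕ) - 1, by omega⟩

lemma coe_succAbove {m : ℕ} (p : Fin (m+1)) (j : Fin m) :
    ((p.succAbove j : Fin (m+1)) : ℕ) = if (j:ℕ) < (p:ℕ) then (j:ℕ) else (j:ℕ)+1 := by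
  rcases lt_or_ge (j:ℕ) (p:ℕ) with h | h
  · rw [Fin.succAbove_of_castSucc_lt _ _ (by simpa [Fin.lt_def] using h)]
    simp [h]
  · rw [Fin.succAbove_of_le_castSucc _ _ (by simpa [Fin.le_def] using h)]
    simp [Nat.not_lt.mpr h]

lemma ins_del_one {n : ℕ} (w : Fin (n+2) → Bool) :
    (fun i => ins w ((1 : Fin (n+3)).succAbove i)) = w := by
  funext i
  by_cases h0 : (i:ℕ) = 0
  · have hk : (((1 : Fin (n+3)).succAbove i) : ℕ) = 0 := by
      rw [coe_succAbove, if_pos] <;> simp [h0]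
    simp only [ins, hk]
    rw [dif_pos trivial]
    exact congrArg w (Fin.ext h0.symm)
  · have hk : (((1 : Fin (n+3)).succAbove i) : ℕ) = (i:ℕ) + 1 := by
      rw [coe_succAbove, if_neg] <;> simp only [Fin.val_one] <;> omega
    simp only [ins, hk]
    rw [dif_neg (by omega), if_neg (by omega)]
    refine congrArg w (Fin.ext ?_)
    simp only [fin_val_mk]
    omega

lemma ins_comm {n : ℕ} (w : Fin (n+2) → Bool) (p : Fin (n+2)) (hp : (p:ℕ) ≠ 0) :
    (fun i => ins w (p.succ.succAbove i)) = ins (fun j => w (p.succAbove j)) := by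
  funext i
  have hc : ((p.succ.succAbove i : Fin (n+3)) : ℕ)
      = if (i:ℕ) < (p:ℕ)+1 then (i:ℕ) else (i:ℕ)+1 := by
    simpa using coe_succAbove p.succ i
  by_cases h0 : (i:ℕ) = 0
  · have hk : ((p.succ.succAbove i : Fin (n+3)) : ℕ) = 0 := by
      rw [hc, if_pos (by omega)]; exact h0
    simp only [ins, hk, h0]
    rw [dif_pos trivial, dif_pos trivial]
    refine congrArg w (Fin.ext ?_)
    simp only [coe_succAbove, Fin.val_zero]
    exact (if_pos (Nat.pos_of_ne_zero hp)).symm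
  · by_cases h1 : (i:ℕ) = 1
    · have hk : ((p.succ.succAbove i : Fin (n+3)) : ℕ) = 1 := by
        rw [hc, if_pos (by omega)]; exact h1
      simp only [ins, hk, h1]
      norm_num
    · rcases lt_or_ge (i:ℕ) ((p:ℕ)+1) with hlt | hge
      · have hk : ((p.succ.succAbove i : Fin (n+3)) : ℕ) = (i:ℕ) := by
          rw [hc, if_pos hlt]
        simp only [ins, hk]
        rw [dif_neg h0, if_neg h1, dif_neg h0, if_neg h1]
        refine congrArg w (Fin.ext ?_)
        simp only [coe_succAbove, fin_val_mk]
        split_ifs <;> omega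
      · have hk : ((p.succ.succAbove i : Fin (n+3)) : ℕ) = (i:ℕ)+1 := by
          rw [hc, if_neg (by omega)]
        simp only [ins, hk]
        rw [dif_neg (by omega), if_neg (by omega), dif_neg h0, if_neg h1]
        refine congrArg w (Fin.ext ?_)
        simp only [coe_succAbove, fin_val_mk]
        split_ifs <;> omega

/-- The cochain complex `U = (T̲(V), b₁)` is acyclic: the kernel of `b₁` on the
lowest degree component `V` is zero, and every cocycle in degree `≥ 2` is a
coboundary. -/
theorem U_acyclic (K : Type) [Field K] [CharZero K] :
    (∀ X : Wd K 1, b1 K 1 X = 0 → X = 0) ∧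
    (∀ n : ℕ, ∀ X : Wd K (n + 2), b1 K (n + 2) X = 0 →
      ∃ Y : Wd K (n + 1), b1 K (n + 1) Y = X) := by
  constructor
  · intro X hX
    funext u
    have h := congrFun hX (fun _ => u 0)
    simp only [b1, Pi.zero_apply, Fin.sum_univ_two] at h
    have hu : (fun _ : Fin 1 => u 0) = u := by
      funext j
      exact congrArg u (Subsingleton.elim 0 j)
    simpa [hu] using h
  · intro n X hX
    refine ⟨fun u => X (ins u), ?_⟩
    funext w
    have h := congrFun hX (ins w)
    simp only [b1, Pi.zero_apply] at h
    rw [Fin.sum_univ_succ, Fin.sum_univ_succ] at h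
    simp only [Fin.val_zero, Fin.val_succ, Fin.succ_zero_eq_one, Fin.val_one] at h
    rw [ins_del_one] at h
    simp only [b1]
    rw [Fin.sum_univ_succ]
    simp only [Fin.val_zero, Fin.val_succ]
    have hsum : ∑ r : Fin (n+1),
        (if (r:ℕ) + 1 + 1 = 0 then 0 else (-1:K) ^ ((r:ℕ) + 1 + 1 + 1)) *
          X (fun j => ins w ((r.succ.succ).succAbove j))
        = - ∑ r : Fin (n+1),
        (if (r:ℕ) + 1 = 0 then 0 else (-1:K) ^ ((r:ℕ) + 1 + 1)) *
          X (ins fun j => w (r.succ.succAbove j)) := by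
      rw [← Finset.sum_neg_distrib]
      refine Finset.sum_congr rfl fun r _ => ?_
      rw [show (fun j => ins w ((r.succ.succ).succAbove j)) = ins fun j => w (r.succ.succAbove j)
        from ins_comm w r.succ (by simp)]
      simp only [Nat.add_eq_zero, Nat.succ_ne_zero, and_false, if_false]
      ring
    rw [hsum] at h
    norm_num at h ⊢
    linear_combination -h
end

section
/- Let V be spanned by degree-1 symbols a and b over a field K of characteristic zero, and let R be the truncated tensor algebra T̲(V) with differential b₂(v₁⋯vₙ) = -(a+b)v₁⋯vₙ + Σ_{i=1}^n (-1)^{i+1} v₁⋯v_i (a+b) v_{i+1}⋯vₙ. Then H^n(R) = 0 for n ≠ 1, H^1(R) ≅ K, and H^1(R) is spanned by the class of the cocycle a+b. -/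
/-- The differential `b₂(v₁⋯vₙ) = -(a+b)v₁⋯vₙ + b₁(v₁⋯vₙ)`. -/
def b2 (K : Type) [Field K] (n : ℕ) (X : Wd K n) : Wd K (n + 1) :=
  fun w => -(X (fun j => w j.succ)) + b1 K n X w

lemma key (K : Type) [Field K] (m : ℕ) (X : Wd K (m+1)) (w : Fin (m+1) → Bool) :
    b2 K (m+1) X (Fin.cons false w) + b2 K m (fun u => X (Fin.cons false u)) w = -X w := by
  have hA : ∀ x : Fin (m+1), (fun j => (Fin.cons false w : Fin (m+2) → Bool) (x.succ.succAbove j)) =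
      (Fin.cons false (fun j => w (x.succAbove j)) : Fin (m+1) → Bool) := by
    intro x; funext j
    refine Fin.cases ?_ (fun j => ?_) j
    · simp
    · simp [Fin.succ_succAbove_succ]
  simp only [b2, b1]
  rw [Fin.sum_univ_succ]
  simp only [Fin.val_zero, Fin.val_succ, if_pos rfl, zero_mul, Fin.succ_succAbove_zero,
    Fin.cons_succ, Fin.cons_zero, hA]
  have hS : (∑ x : Fin (m+1), (if (x:ℕ)+1 = 0 then 0 else (-1:K)^((x:ℕ)+1+1)) * X (Fin.cons false fun j => w (x.succAbove j)))
      + (∑ x : Fin (m+1), (if (x:ℕ) = 0 then 0 else (-1:K)^((x:ℕ)+1)) * X (Fin.cons false fun j => w (x.succAbove j)))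
      = X (Fin.cons false fun j => w j.succ) := by
    rw [← Finset.sum_add_distrib, Fin.sum_univ_succ]
    have h0 : (fun j => w ((0 : Fin (m+1)).succAbove j)) = fun j => w j.succ := by
      funext j; simp [Fin.succAbove_zero]
    rw [h0]
    simp only [Fin.val_zero, Fin.val_succ]
    norm_num
    apply Finset.sum_eq_zero
    intro x _
    ring_nf
  rw [if_pos trivial, zero_mul]
  linear_combination hS

lemma b2_neg (K : Type) [Field K] (n : ℕ) (X : Wd K n) (w : Fin (n+1) → Bool) :
    b2 K n (fun u => -X u) w = -(b2 K n X w) := by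
  simp only [b2, b1, mul_neg, neg_neg, Finset.sum_neg_distrib]
  ring

/-- For `R = (T̲(V), b₂)`: `H¹(R)` is one-dimensional, spanned by the class of
the cocycle `a + b` (the constant function `1` on words of length one), and
`Hⁿ(R) = 0` for `n ≠ 1` (in degree `≥ 2` every cocycle is a coboundary). -/
theorem R_cohomology (K : Type) [Field K] [CharZero K] :
    (∀ X : Wd K 1, b2 K 1 X = 0 ↔ ∃ c : K, X = fun _ => c) ∧
    ((fun _ => (1 : K)) ≠ (0 : Wd K 1)) ∧
    (∀ n : ℕ, ∀ X : Wd K (n + 2), b2 K (n + 2) X = 0 →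
      ∃ Y : Wd K (n + 1), b2 K (n + 1) Y = X) := by
  refine ⟨?_, ?_, ?_⟩
  · intro X
    constructor
    · intro h
      refine ⟨X (fun _ => false), ?_⟩
      funext v
      have hv : v = fun _ => v 0 := by
        funext j; congr 1; exact Subsingleton.elim _ _
      have h2 := congrFun h (Fin.cons (v 0) (fun _ => false))
      simp only [b2, b1, Fin.sum_univ_succ, Finset.sum_const, Pi.zero_apply,
        Finset.univ_unique, Finset.sum_singleton] at h2
      norm_num at h2
      rw [hv]
      have he : (fun j : Fin 1 => (Fin.cons (v 0) (fun _ => false) : Fin 2 → Bool) (Fin.succAbove 1 j)) = fun _ : Fin 1 => v 0 := by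
        funext j
        rw [Subsingleton.elim j 0]
        rfl
      rw [he] at h2
      linear_combination h2
    · rintro ⟨c, rfl⟩
      funext w
      simp [b2, b1, Fin.sum_univ_two]
  · intro h
    have := congrFun h (fun _ => false)
    simp at this
  · intro n X h
    refine ⟨fun u => -X (Fin.cons false u), ?_⟩
    funext w
    rw [show (fun u => -X (Fin.cons false u)) = (fun u => -(fun v => X (Fin.cons false v)) u) from rfl,
      b2_neg]
    have := key K (n+1) X w
    rw [h] at this
    simp only [Pi.zero_apply, zero_add] at this
    rw [this, neg_neg]
end

section
/- Let P be the full tensor algebra T(V) on V = span{a, b} (a, b of degree 1) over a field K of characteristic zero, with differential b₃ defined by b₃(1) = (a+b)/2, b₃(a) = b₃(b) = 0, and b₃(v₁⋯vₙ) = Σ_{i=1}^{n-1} (-1)^{i+1} v₁⋯v_i (a+b) v_{i+1}⋯vₙ for n ≥ 2. Then H^n(P) = 0 for n ≠ 1, H^1(P) ≅ K spanned by the class of a, and the cocycles a and -b are cohomologous. -/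
/-- The differential `b₃` in positive degrees: it inserts `a+b` only at the
internal positions `i = 1, …, n-1` with sign `(-1)^{i+1}`; in particular it
vanishes on degree 1 (so `b₃(a) = b₃(b) = 0`). -/
def b3 (K : Type) [Field K] (n : ℕ) (X : Wd K n) : Wd K (n + 1) :=
  fun w => ∑ p : Fin (n + 1),
    (if (p : ℕ) = 0 ∨ (p : ℕ) = n then 0 else (-1 : K) ^ ((p : ℕ) + 1))
      * X (fun j => w (p.succAbove j))

/-- The differential `b₃` on the degree-0 component: `b₃(1) = (a+b)/2`, i.e.
`c ↦` the constant function `c/2` on one-letter words. -/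
def b3zero (K : Type) [Field K] (c : K) : Wd K 1 := fun _ => c / 2

/-- The element `a` of `V` in the function model. -/
def aElt (K : Type) [Field K] : Wd K 1 := fun w => if w 0 = false then 1 else 0

/-- The element `b` of `V` in the function model. -/
def bElt (K : Type) [Field K] : Wd K 1 := fun w => if w 0 = true then 1 else 0


/-- extension of a word to all of ℕ -/
def ext {m : ℕ} (w : Fin m → Bool) : ℕ → Bool :=
  fun k => if h : k < m then w ⟨k, h⟩ else false

lemma ext_apply {m : ℕ} (w : Fin m → Bool) (x : Fin m) : w x = ext w (x:ℕ) := by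
  simp [ext, x.isLt]

/-- insert `false` at position 1 -/
def ins1 {n : ℕ} (w : Fin (n+1) → Bool) : Fin (n+2) → Bool :=
  fun j => if (j:ℕ) = 0 then w 0 else if (j:ℕ) = 1 then false else ext w ((j:ℕ)-1)

lemma succAbove_val {n : ℕ} (p : Fin (n+1)) (j : Fin n) :
    ((p.succAbove j : Fin (n+1)) : ℕ) = if (j:ℕ) < (p:ℕ) then (j:ℕ) else (j:ℕ)+1 := by
  rw [Fin.succAbove]
  split_ifs with h h2 h3
  · rfl
  · exact absurd h h2
  · exact absurd h3 h
  · rfl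

lemma ins1_eq {n : ℕ} (w : Fin (n+1) → Bool) (j : Fin (n+2)) :
    ins1 w j = if (j:ℕ) = 0 then ext w 0 else if (j:ℕ) = 1 then false else ext w ((j:ℕ)-1) := by
  simp only [ins1]
  split_ifs <;> first | rfl | (rw [ext_apply w 0]; rfl)

lemma remove_eq {n : ℕ} (w : Fin (n+1) → Bool) (p : Fin (n+1)) (j : Fin n) :
    w (p.succAbove j) = ext w (if (j:ℕ) < (p:ℕ) then (j:ℕ) else (j:ℕ)+1) := by
  rw [ext_apply w, succAbove_val]

lemma remove_one {n : ℕ} (w : Fin (n+2) → Bool) :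
    (fun j : Fin (n+2) => ins1 w (((0:Fin (n+2)).succ).succAbove j)) = w := by
  funext j
  rw [ins1_eq, succAbove_val, ext_apply w j]
  have h1 : (((0:Fin (n+2)).succ : Fin (n+3)) : ℕ) = 1 := by simp
  rw [h1]
  have hj := j.isLt
  split_ifs <;> first | rfl | contradiction | omega | (congr 1; omega)

lemma key_s3 {n : ℕ} (w : Fin (n+2) → Bool) (i : Fin (n+1)) :
    (fun j : Fin (n+2) => ins1 w ((i.succ.succ).succAbove j))
      = ins1 (fun j : Fin (n+1) => w ((i.succ).succAbove j)) := by
  funext j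
  have hq : ((i.succ.succ : Fin (n+3)) : ℕ) = (i:ℕ) + 2 := by simp
  have hp : ((i.succ : Fin (n+2)) : ℕ) = (i:ℕ) + 1 := by simp
  have hext : ∀ k : ℕ, ext (fun j' : Fin (n+1) => w ((i.succ).succAbove j')) k
      = if k < n+1 then ext w (if k < (i:ℕ)+1 then k else k+1) else false := by
    intro k
    by_cases hk : k < n+1
    · rw [if_pos hk]
      show (if h : k < n+1 then w (i.succ.succAbove ⟨k,h⟩) else false) = _
      rw [dif_pos hk, remove_eq w i.succ ⟨k, hk⟩]
      simp [hp]
    · rw [if_neg hk]; exact dif_neg hk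
  rw [ins1_eq, ins1_eq, succAbove_val, hq, hext, hext]
  have hj := j.isLt
  have hi := i.isLt
  split_ifs <;> first | rfl | contradiction | omega | (congr 1; omega)

/-- For `P = (T(V), b₃)`: `Hⁿ(P) = 0` for `n ≠ 1`, `H¹(P) ≅ K` is spanned by
the class of `a`, and the cocycles `a` and `-b` are cohomologous. -/
theorem P_cohomology (K : Type) [Field K] [CharZero K] :
    -- H⁰ = 0
    (∀ c : K, b3zero K c = 0 → c = 0) ∧
    -- Hⁿ = 0 for n ≥ 2
    (∀ n : ℕ, ∀ X : Wd K (n + 2), b3 K (n + 2) X = 0 →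
      ∃ Y : Wd K (n + 1), b3 K (n + 1) Y = X) ∧
    -- every degree-1 element is a cocycle
    (∀ X : Wd K 1, b3 K 1 X = 0) ∧
    -- H¹ is spanned by the class of a
    (∀ X : Wd K 1, ∃ c d : K, X = c • aElt K + b3zero K d) ∧
    -- the class of a is nonzero, so H¹ ≅ K
    (∀ d : K, aElt K ≠ b3zero K d) ∧
    -- a and -b are cohomologous
    (∃ d : K, aElt K - (-(bElt K)) = b3zero K d) := by
  refine ⟨?_, ?_, ?_, ?_, ?_, ?_⟩
  · intro c h
    have := congrFun h (fun _ => false)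
    simp only [b3zero, Pi.zero_apply] at this
    field_simp at this
    simpa using this
  · intro n X hX
    refine ⟨fun u => X (ins1 u), ?_⟩
    funext w
    have hw := congrFun hX (ins1 w)
    simp only [b3, Pi.zero_apply] at hw ⊢
    rw [Fin.sum_univ_succ] at hw
    rw [Fin.sum_univ_succ] at hw
    rw [Fin.sum_univ_succ]
    -- handle boundary terms
    have e0 : ((0 : Fin (n+3)) : ℕ) = 0 := rfl
    have e0' : ((0 : Fin (n+2)) : ℕ) = 0 := rfl
    have e1 : (((0:Fin (n+2)).succ : Fin (n+3)) : ℕ) = 1 := by simp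
    rw [remove_one w] at hw
    simp only [e0, e0', e1] at hw ⊢
    rw [if_pos (Or.inl trivial), zero_mul, zero_add] at hw ⊢
    rw [if_neg (by omega), pow_two] at hw
    simp only [neg_mul, one_mul, neg_neg] at hw
    -- hw : X w + ∑ i, F i.succ.succ = 0
    have hterm : ∀ i : Fin (n+1),
        (if ((i.succ : Fin (n+2)) : ℕ) = 0 ∨ ((i.succ : Fin (n+2)) : ℕ) = n + 1 then 0
          else (-1 : K) ^ (((i.succ : Fin (n+2)) : ℕ) + 1))
          * X (ins1 (fun j => w ((i.succ).succAbove j)))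
        = -((if ((i.succ.succ : Fin (n+3)) : ℕ) = 0 ∨ ((i.succ.succ : Fin (n+3)) : ℕ) = n + 2 then 0
          else (-1 : K) ^ (((i.succ.succ : Fin (n+3)) : ℕ) + 1))
          * X (fun j => ins1 w ((i.succ.succ).succAbove j))) := by
      intro i
      rw [key_s3 w i]
      have hs : ((i.succ : Fin (n+2)) : ℕ) = (i:ℕ) + 1 := by simp
      have hss : ((i.succ.succ : Fin (n+3)) : ℕ) = (i:ℕ) + 2 := by simp
      rw [hs, hss]
      by_cases hn : (i:ℕ) = n
      · rw [if_pos (Or.inr (by omega)), if_pos (Or.inr (by omega))]; ring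
      · rw [if_neg (by omega), if_neg (by omega)]
        rw [pow_succ ((-1:K)) ((i:ℕ)+2)]
        ring
    calc ∑ i : Fin (n+1),
          (if ((i.succ : Fin (n+2)) : ℕ) = 0 ∨ ((i.succ : Fin (n+2)) : ℕ) = n + 1 then 0
            else (-1 : K) ^ (((i.succ : Fin (n+2)) : ℕ) + 1))
            * X (ins1 (fun j => w ((i.succ).succAbove j)))
        = -∑ i : Fin (n+1),
          (if ((i.succ.succ : Fin (n+3)) : ℕ) = 0 ∨ ((i.succ.succ : Fin (n+3)) : ℕ) = n + 2 then 0
            else (-1 : K) ^ (((i.succ.succ : Fin (n+3)) : ℕ) + 1))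
            * X (fun j => ins1 w ((i.succ.succ).succAbove j)) := by
          rw [← Finset.sum_neg_distrib]
          exact Finset.sum_congr rfl (fun i _ => hterm i)
      _ = X w := by linear_combination -hw
  · intro X
    funext w
    simp only [b3, Pi.zero_apply]
    apply Finset.sum_eq_zero
    intro p _
    have hp : (p:ℕ) = 0 ∨ (p:ℕ) = 1 := by omega
    rw [if_pos hp, zero_mul]
  · intro X
    refine ⟨X (fun _ => false) - X (fun _ => true), 2 * X (fun _ => true), ?_⟩
    funext w
    have hw : w = fun _ => w 0 := funext fun i => by rw [Subsingleton.elim i 0]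
    simp only [Pi.add_apply, Pi.smul_apply, aElt, b3zero, smul_eq_mul]
    rw [hw]
    cases h : w 0 <;> simp
  · intro d h
    have h1 := congrFun h (fun _ => false)
    have h2 := congrFun h (fun _ => true)
    simp only [aElt, b3zero] at h1 h2
    norm_num at h1 h2
    rw [← h1] at h2
    exact one_ne_zero h2.symm
  · refine ⟨2, ?_⟩
    funext w
    simp only [Pi.sub_apply, Pi.neg_apply, aElt, bElt, b3zero]
    cases h : w 0 <;> norm_num
end
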